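/- Let m be a positive integer and λ ∈ ℝ, and define R_λ : ℂ² × ℂ² → ℂ by R_λ(z,w) = (z₁·conj(w₁) + z₂·conj(w₂))^{2m} − λ·(z₁·z₂·conj(w₁)·conj(w₂))^m. Then R_λ ∈ 𝒫_2(ℂ²) if and only if λ ≤ 2^{2m−1}. -/

import Mathlib

open scoped ComplexOrder

/-- `R ∈ 𝒫_N(ℂ²)`: for all points `z_1, …, z_N ∈ ℂ²` and scalars `a_1, …, a_N ∈ ℂ`,
the sum `Σ_{i,j} R(z_i, z_j) a_i conj(a_j)` is a nonnegative real number. -/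
def InP {M : Type*} (N : ℕ) (R : M × M → ℂ) : Prop :=
  ∀ (z : Fin N → M) (a : Fin N → ℂ),
    0 ≤ ∑ i, ∑ j, R (z i, z j) * a i * (starRingEnd ℂ) (a j)

/-- The perturbed Fubini–Study family:
`R_λ(z,w) = ⟨z,w⟩^{2m} − λ (z₁ z₂ conj(w₁) conj(w₂))^m` on `ℂ² × ℂ²`. -/
noncomputable def Rlam (m : ℕ) (lam : ℝ) : (ℂ × ℂ) × (ℂ × ℂ) → ℂ :=
  fun p =>
    (p.1.1 * (starRingEnd ℂ) p.2.1 + p.1.2 * (starRingEnd ℂ) p.2.2) ^ (2 * m)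
      - (lam : ℂ) * (p.1.1 * p.1.2 * (starRingEnd ℂ) p.2.1 * (starRingEnd ℂ) p.2.2) ^ m

open Finset

namespace S15

noncomputable def L (m : ℕ) : ℝ := 2 ^ (2*m-1)
noncomputable def hf (m : ℕ) (t : ℝ) : ℝ := (1+t)^(2*m) - L m * t^m

noncomputable def h1 (m : ℕ) (t : ℝ) : ℝ :=
  ((2*m : ℕ):ℝ)*(1+t)^(2*m-1) - L m * ((m:ℝ)*t^(m-1))
noncomputable def h2 (m : ℕ) (t : ℝ) : ℝ :=
  ((2*m : ℕ):ℝ)*(((2*m-1 : ℕ):ℝ)*(1+t)^(2*m-1-1))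
    - L m * ((m:ℝ)*(((m-1 : ℕ):ℝ)*t^(m-1-1)))

lemma hdh (m : ℕ) (t : ℝ) : HasDerivAt (hf m) (h1 m t) t := by
  have A : HasDerivAt (fun x : ℝ => (1+x)^(2*m)) (((2*m:ℕ):ℝ)*(1+t)^(2*m-1)) t := by
    have := ((hasDerivAt_id t).const_add 1).fun_pow (2*m)
    simpa only [mul_one, id_eq] using this
  have B : HasDerivAt (fun x : ℝ => L m * x^m) (L m * ((m:ℝ)*t^(m-1))) t :=
    (hasDerivAt_pow m t).const_mul (L m)
  exact A.sub B

lemma hdh1 (m : ℕ) (t : ℝ) : HasDerivAt (h1 m) (h2 m t) t := by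
  have A : HasDerivAt (fun x : ℝ => ((2*m:ℕ):ℝ)*(1+x)^(2*m-1))
      (((2*m:ℕ):ℝ)*(((2*m-1:ℕ):ℝ)*(1+t)^(2*m-1-1))) t := by
    have := (((hasDerivAt_id t).const_add 1).fun_pow (2*m-1)).const_mul (((2*m:ℕ):ℝ))
    simpa only [mul_one, id_eq] using this
  have B : HasDerivAt (fun x : ℝ => L m * ((m:ℝ)*x^(m-1)))
      (L m * ((m:ℝ)*(((m-1:ℕ):ℝ)*t^(m-1-1)))) t :=
    ((hasDerivAt_pow (m-1) t).const_mul ((m:ℝ))).const_mul (L m)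
  exact A.sub B

lemma N1_eq {m : ℕ} (hm : 0 < m) (t : ℝ) :
    (h1 m t + t*h2 m t)*hf m t - t*(h1 m t)^2
    = (m:ℝ)*(1+t)^(2*m-2)*(2*(1+t)^(2*m) - L m*t^(m-1)*((m:ℝ)*(1-t)^2+2*t)) := by
  have c2 : ((2*m:ℕ):ℝ) = 2*(m:ℝ) := by push_cast; try ring
  have c3 : ((2*m-1:ℕ):ℝ) = 2*(m:ℝ)-1 := by
    rw [Nat.cast_sub (by omega : 1 ≤ 2*m)]; push_cast; try ring
  have e1 : (1+t)^(2*m) = (1+t)^(2*m-2)*(1+t)^2 := by rw [← pow_add]; congr 1 <;> try omega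
  have e2 : (1+t)^(2*m-1) = (1+t)^(2*m-2)*(1+t) := by rw [← pow_succ]; congr 1 <;> try omega
  have e3 : t^m = t^(m-1)*t := by rw [← pow_succ]; congr 1 <;> try omega
  have e4 : (1+t)^(2*m-1-1) = (1+t)^(2*m-2) := by congr 1 <;> try omega
  have e5 : (((m-1:ℕ):ℝ)*t^(m-1-1))*t = ((m:ℝ)-1)*t^(m-1) := by
    rcases Nat.lt_or_ge m 2 with h | h
    · have hm1 : m = 1 := by omega
      subst hm1; simp
    · have ht' : t^(m-1-1)*t = t^(m-1) := by rw [← pow_succ]; congr 1 <;> try omega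
      have hc : ((m-1:ℕ):ℝ) = (m:ℝ)-1 := by
        rw [Nat.cast_sub (by omega : 1 ≤ m)]; push_cast; try ring
      rw [mul_assoc, ht', hc]
  have H1 : h1 m t = 2*(m:ℝ)*((1+t)^(2*m-2)*(1+t)) - L m*((m:ℝ)*t^(m-1)) := by
    unfold h1; rw [c2, e2]
  have HF : hf m t = (1+t)^(2*m-2)*(1+t)^2 - L m*(t^(m-1)*t) := by
    unfold hf; rw [e1, e3]
  have TH2 : t*h2 m t = 2*(m:ℝ)*(2*(m:ℝ)-1)*((1+t)^(2*m-2)*t)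
      - L m*(m:ℝ)*(((m:ℝ)-1)*t^(m-1)) := by
    unfold h2; rw [c2, c3, e4]
    calc t*(2*(m:ℝ)*((2*(m:ℝ)-1)*(1+t)^(2*m-2)) - L m*((m:ℝ)*(((m-1:ℕ):ℝ)*t^(m-1-1))))
        = 2*(m:ℝ)*(2*(m:ℝ)-1)*((1+t)^(2*m-2)*t)
          - L m*(m:ℝ)*((((m-1:ℕ):ℝ)*t^(m-1-1))*t) := by ring
      _ = _ := by rw [e5]
  rw [H1, HF, TH2, e1]
  ring


lemma L_pos (m : ℕ) : 0 < L m := by unfold L; positivity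

lemma two_L {m : ℕ} (hm : 0 < m) : 2 * L m = 4^m := by
  have h4 : (4:ℝ)^m = 2^(2*m) := by rw [show (4:ℝ) = 2^2 by norm_num, ← pow_mul]
  rw [h4, L, ← pow_succ']
  congr 1; omega

lemma L_eq {m : ℕ} (hm : 0 < m) : L m = 2*4^(m-1) := by
  have h4 : (4:ℝ)^(m-1) = 2^(2*(m-1)) := by
    rw [show (4:ℝ) = 2^2 by norm_num, ← pow_mul]
  rw [h4, L, ← pow_succ']
  congr 1; omega

lemma bern (a b : ℝ) (ha : 0 ≤ a) (hb : 0 ≤ b) :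
    ∀ n : ℕ, b^n + n*a*b^(n-1) ≤ (a+b)^n := by
  intro n
  induction n with
  | zero => simp
  | succ n ih =>
    rcases Nat.eq_zero_or_pos n with h0 | hn
    · subst h0; simp; linarith
    · have hbn : b^(n-1)*b = b^n := by
        rw [← pow_succ]; congr 1; omega
      have h2 : (a+b) * (b^n + n*a*b^(n-1)) ≤ (a+b)^(n+1) := by
        rw [pow_succ, mul_comm ((a+b)^n) (a+b)]
        exact mul_le_mul_of_nonneg_left ih (by linarith)
      have expand : (a+b)*(b^n + n*a*b^(n-1))
          = b^n*b + a*b^n + (n:ℝ)*a*(b^(n-1)*b) + (n:ℝ)*a^2*b^(n-1) := by ring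
      have hnn : (0:ℝ) ≤ (n:ℝ)*a^2*b^(n-1) := by positivity
      rw [expand, hbn] at h2
      have hfin : b^(n+1) + ((n:ℕ)+1:ℝ)*a*b^n ≤ (a+b)^(n+1) := by
        rw [pow_succ]
        nlinarith
      simpa [Nat.add_sub_cancel] using hfin

lemma ft {m : ℕ} {t : ℝ} (ht : 0 ≤ t) : (4*t)^m ≤ (1+t)^(2*m) := by
  rw [pow_mul]
  exact pow_le_pow_left₀ (by positivity) (by nlinarith [sq_nonneg (1-t)]) m

lemma hf_lower {m : ℕ} {t : ℝ} (hm : 0 < m) (ht : 0 ≤ t) :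
    (1+t)^(2*m-2) * (1+t^2) ≤ hf m t := by
  have e1 : (1+t)^(2*m) = (1+t)^(2*m-2)*(1+t^2) + 2*t*(1+t)^(2*m-2) := by
    have h : (1+t)^(2*m) = (1+t)^(2*m-2)*(1+t)^2 := by
      rw [← pow_add]; congr 1; omega
    rw [h]; ring
  have hft : (4*t)^(m-1) ≤ (1+t)^(2*(m-1)) := ft ht
  have em : 2*(m-1) = 2*m-2 := by omega
  rw [em] at hft
  have e2 : L m * t^m = 2*t*((4*t)^(m-1)) := by
    rw [mul_pow, L_eq hm]
    have h : t*t^(m-1) = t^m := by rw [← pow_succ']; congr 1; omega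
    calc 2*4^(m-1) * t^m = 2*4^(m-1)*(t*t^(m-1)) := by rw [h]
    _ = 2*t*(4^(m-1)*t^(m-1)) := by ring
  have e3 : 2*t*((4*t)^(m-1)) ≤ 2*t*(1+t)^(2*m-2) :=
    mul_le_mul_of_nonneg_left hft (by linarith)
  unfold hf
  linarith

lemma hf_ge_one {m : ℕ} {t : ℝ} (hm : 0 < m) (ht : 0 ≤ t) : 1 ≤ hf m t := by
  have h1 : (1:ℝ) ≤ (1+t)^(2*m-2) := one_le_pow₀ (by linarith)
  nlinarith [hf_lower hm ht, sq_nonneg t]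

lemma hf_ge_pow {m : ℕ} {t : ℝ} (hm : 0 < m) (ht : 0 ≤ t) : t^(2*m) ≤ hf m t := by
  have h1 : t^(2*m-2) ≤ (1+t)^(2*m-2) := pow_le_pow_left₀ ht (by linarith) _
  have h2 : t^(2*m) = t^(2*m-2)*t^2 := by rw [← pow_add]; congr 1; omega
  nlinarith [hf_lower hm ht, pow_nonneg ht (2*m-2), sq_nonneg t]

lemma star' {m : ℕ} {t : ℝ} (hm : 0 < m) (ht : 0 ≤ t) :
    L m * t^(m-1)*((m:ℝ)*(1-t)^2 + 2*t) ≤ 2*(1+t)^(2*m) := by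
  have hb := bern ((1-t)^2) (4*t) (sq_nonneg _) (by linarith) m
  rw [show (1-t)^2 + 4*t = (1+t)^2 by ring, ← pow_mul] at hb
  rw [mul_pow, mul_pow] at hb
  -- hb : 4^m*t^m + m*(1-t)^2*(4^(m-1)*t^(m-1)) ≤ (1+t)^(2*m)
  have e4 : t^m = t^(m-1)*t := by rw [← pow_succ]; congr 1; omega
  have e5 : L m = 2*4^(m-1) := L_eq hm
  have e6 : (4:ℝ)^m = 4*4^(m-1) := by rw [← pow_succ']; congr 1; omega
  rw [e4, e6] at hb
  rw [e5]
  have hTnn : (0:ℝ) ≤ t^(m-1) := pow_nonneg ht _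
  have hXnn : (0:ℝ) ≤ (4:ℝ)^(m-1) := by positivity
  nlinarith [mul_nonneg (mul_nonneg hXnn hTnn) ht]

noncomputable def qf (m : ℕ) (t : ℝ) : ℝ := t * h1 m t / hf m t

lemma hasDerivAt_qf {m : ℕ} (hm : 0 < m) {t : ℝ} (ht : 0 ≤ t) :
    HasDerivAt (qf m)
      (((1*h1 m t + t*h2 m t)*hf m t - t*h1 m t*h1 m t)/(hf m t)^2) t := by
  have hne : hf m t ≠ 0 := by have := hf_ge_one hm ht; linarith
  have hnum : HasDerivAt (fun t : ℝ => t * h1 m t) (1*h1 m t + t*h2 m t) t :=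
    (hasDerivAt_id t).mul (hdh1 m t)
  exact hnum.div (hdh m t) hne

lemma qf_mono {m : ℕ} (hm : 0 < m) : MonotoneOn (qf m) (Set.Ici (0:ℝ)) := by
  apply monotoneOn_of_deriv_nonneg (convex_Ici 0)
  · intro t ht
    exact (hasDerivAt_qf hm ht).continuousAt.continuousWithinAt
  · intro t ht
    rw [interior_Ici] at ht
    exact (hasDerivAt_qf hm (le_of_lt ht)).differentiableAt.differentiableWithinAt
  · intro t ht
    rw [interior_Ici] at ht
    rw [(hasDerivAt_qf hm ht.le).deriv]
    apply div_nonneg _ (sq_nonneg _)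
    have hrw : (1*h1 m t + t*h2 m t)*hf m t - t*h1 m t*h1 m t
        = (h1 m t + t*h2 m t)*hf m t - t*(h1 m t)^2 := by ring
    rw [hrw, N1_eq hm t]
    have ht' : 0 < t := Set.mem_Ioi.mp ht
    have hs := star' hm ht.le
    have hA : (0:ℝ) ≤ (1+t)^(2*m-2) := pow_nonneg (by linarith) _
    have hmn : (0:ℝ) ≤ (m:ℝ) := Nat.cast_nonneg m
    have hbig : (0:ℝ) ≤ 2*(1+t)^(2*m) - L m*t^(m-1)*((m:ℝ)*(1-t)^2+2*t) := by linarith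
    exact mul_nonneg (mul_nonneg hmn hA) hbig

lemma Qlem {m : ℕ} (hm : 0 < m) {x y : ℝ} (hy : 0 ≤ y) (hxy : y ≤ x) :
    y*h1 m y*hf m x ≤ x*h1 m x*hf m y := by
  have hq := qf_mono hm (Set.mem_Ici.mpr hy) (Set.mem_Ici.mpr (hy.trans hxy)) hxy
  have hfy := hf_ge_one hm hy
  have hfx := hf_ge_one hm (hy.trans hxy)
  rw [qf, qf, div_le_div_iff₀ (by linarith) (by linarith)] at hq
  linarith

lemma l1aux {m : ℕ} (hm : 0 < m) {x y s : ℝ} (hy : 0 ≤ y) (hxy : y ≤ x) (hs : 0 ≤ s)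
    (hsq : s^2 = x*y) : (hf m s)^2 ≤ hf m x * hf m y := by
  have hx : 0 ≤ x := hy.trans hxy
  rcases eq_or_lt_of_le hy with hy0 | hy0
  · -- y = 0
    have hy0' : y = 0 := hy0.symm
    subst hy0'
    have hs0 : s = 0 := by
      have h2 : s^2 = 0 := by rw [hsq]; ring
      exact pow_eq_zero_iff two_ne_zero |>.mp h2
    subst hs0
    have hf0 : hf m 0 = 1 := by
      unfold hf; rw [zero_pow (by omega : m ≠ 0)]; norm_num
    rw [hf0]
    have := hf_ge_one hm hx
    nlinarith
  · -- 0 < y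
    have hsy : y ≤ s := by nlinarith [sq_nonneg (s-y), sq_nonneg (s+y)]
    have hxs : s ≤ x := by nlinarith [sq_nonneg (s-x), sq_nonneg (s+x)]
    have hs0 : 0 < s := lt_of_lt_of_le hy0 hsy
    have hx0 : 0 < x := lt_of_lt_of_le hy0 hxy
    set Th : ℝ → ℝ := fun u => hf m u * hf m (s^2/u) with hTh
    have hder : ∀ u : ℝ, 0 < u →
        HasDerivAt Th (h1 m u * hf m (s^2/u) + hf m u * (h1 m (s^2/u) * (s^2 * (-(u^2)⁻¹)))) u := by
      intro u hu
      have hinner : HasDerivAt (fun u : ℝ => s^2/u) (s^2 * (-(u^2)⁻¹)) u := by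
        simpa [div_eq_mul_inv] using (hasDerivAt_inv hu.ne').const_mul (s^2)
      have houter : HasDerivAt (hf m) (h1 m (s^2/u)) (s^2/u) := hdh m (s^2/u)
      have hcomp : HasDerivAt (fun u : ℝ => hf m (s^2/u)) (h1 m (s^2/u) * (s^2 * (-(u^2)⁻¹))) u :=
        HasDerivAt.comp u houter hinner
      exact (hdh m u).mul hcomp
    have hmono : MonotoneOn Th (Set.Icc s x) := by
      apply monotoneOn_of_deriv_nonneg (convex_Icc s x)
      · intro u hu
        have hu0 : 0 < u := lt_of_lt_of_le hs0 hu.1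
        exact (hder u hu0).continuousAt.continuousWithinAt
      · intro u hu
        rw [interior_Icc] at hu
        have hu0 : 0 < u := lt_of_lt_of_le hs0 hu.1.le
        exact (hder u hu0).differentiableAt.differentiableWithinAt
      · intro u hu
        rw [interior_Icc] at hu
        have hu0 : 0 < u := lt_of_lt_of_le hs0 hu.1.le
        rw [(hder u hu0).deriv]
        have hyu0 : 0 < s^2/u := by positivity
        have hyu_le : s^2/u ≤ u := by
          rw [div_le_iff₀ hu0]
          nlinarith [hu.1.le]
        have hQ := Qlem hm hyu0.le hyu_le
        have hrw : h1 m u * hf m (s^2/u) + hf m u * (h1 m (s^2/u) * (s^2 * (-(u^2)⁻¹)))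
            = (u*h1 m u*hf m (s^2/u) - (s^2/u)*h1 m (s^2/u)*hf m u)/u := by
          field_simp
          ring
        rw [hrw]
        apply div_nonneg _ hu0.le
        linarith
    have hend := hmono (Set.mem_Icc.mpr ⟨le_refl s, hxs⟩) (Set.mem_Icc.mpr ⟨hxs, le_refl x⟩) hxs
    have hTs : Th s = (hf m s)^2 := by
      rw [hTh]
      simp only []
      rw [show s^2/s = s by rw [pow_two, mul_div_assoc, div_self hs0.ne', mul_one]]
      ring
    have hTx : Th x = hf m x * hf m y := by
      rw [hTh]
      simp only []
      rw [show s^2/x = y by rw [hsq, mul_comm, mul_div_assoc, div_self hx0.ne', mul_one]]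
    rw [hTs, hTx] at hend
    exact hend

lemma l1 {m : ℕ} (hm : 0 < m) {x y s : ℝ} (hx : 0 ≤ x) (hy : 0 ≤ y) (hs : 0 ≤ s)
    (hsq : s^2 = x*y) : (hf m s)^2 ≤ hf m x * hf m y := by
  rcases le_total y x with h | h
  · exact l1aux hm hy h hs hsq
  · rw [mul_comm]
    exact l1aux hm hx h hs (by rw [hsq]; ring)


lemma psi_le {m : ℕ} (hm : 0 < m) {n v μ k : ℝ} (hn : 0 ≤ n) (hnv : n ≤ v) (hμ : 0 ≤ μ)
    (hμv : μ ≤ v) (hk : 2*k - v = v - μ) :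
    n^m/2 + (2*k-n)/2 * (∑ i ∈ Finset.range m, n^i * μ^(m-1-i)) ≤ v^m - μ^m/2 := by
  set G : ℝ := ∑ i ∈ Finset.range m, n^i*μ^(m-1-i) with hG
  have g1 : G*(n-μ) = n^m - μ^m := geom_sum₂_mul n μ m
  have g2 : (∑ i ∈ Finset.range m, v^i*n^(m-1-i))*(v-n) = v^m - n^m := geom_sum₂_mul v n m
  have g3 : G ≤ ∑ i ∈ Finset.range m, n^i*v^(m-1-i) := by
    apply Finset.sum_le_sum
    intro i _
    exact mul_le_mul_of_nonneg_left (pow_le_pow_left₀ hμ hμv _) (pow_nonneg hn _)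
  have g4 : (∑ i ∈ Finset.range m, n^i*v^(m-1-i)) = ∑ i ∈ Finset.range m, v^i*n^(m-1-i) := by
    rw [← Finset.sum_range_reflect (fun i => v^i*n^(m-1-i)) m]
    apply Finset.sum_congr rfl
    intro i hi
    rw [Finset.mem_range] at hi
    rw [Nat.sub_sub_self (by omega : i ≤ m-1)]
    ring
  have h5 : (v-n)*G ≤ v^m - n^m := by
    calc (v-n)*G ≤ (v-n)*(∑ i ∈ Finset.range m, v^i*n^(m-1-i)) :=
          mul_le_mul_of_nonneg_left (g3.trans (le_of_eq g4)) (by linarith)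
      _ = v^m - n^m := by rw [mul_comm]; exact g2
  have hk' : k = v - μ/2 := by linarith
  have e7 : (2*k-n)/2*G = v*G - (μ*G)/2 - (n*G)/2 := by rw [hk']; ring
  have g1' : n*G - μ*G = n^m - μ^m := by nlinarith [g1]
  have h5' : v*G - n*G ≤ v^m - n^m := by nlinarith [h5]
  rw [e7]
  linarith

noncomputable def Hf (m : ℕ) (r ρ : ℝ) : ℝ := (r+ρ)^(2*m) - L m*(r*ρ)^m

lemma Hf_nonneg {m : ℕ} (hm : 0 < m) {r ρ : ℝ} (hr : 0 ≤ r) (hρ : 0 ≤ ρ) :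
    0 ≤ Hf m r ρ := by
  unfold Hf
  have h1 : (4*(r*ρ))^m ≤ ((r+ρ)^2)^m :=
    pow_le_pow_left₀ (by positivity) (by nlinarith [sq_nonneg (r-ρ)]) m
  rw [← pow_mul] at h1
  rw [mul_pow] at h1
  have h2 : 2*(L m*(r*ρ)^m) = 4^m*(r*ρ)^m := by rw [← mul_assoc, two_L hm]
  have h3 : (0:ℝ) ≤ (r*ρ)^m := pow_nonneg (by positivity) m
  have h4 : (0:ℝ) ≤ 4^m*(r*ρ)^m := by positivity
  nlinarith [h1]

lemma Hf_comm (m : ℕ) (r ρ : ℝ) : Hf m r ρ = Hf m ρ r := by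
  unfold Hf; rw [add_comm ρ r, mul_comm ρ r]

lemma Hf_div {m : ℕ} (hm : 0 < m) {a b : ℝ} (hb : 0 < b) :
    Hf m a b = b^(2*m) * hf m (a/b) := by
  unfold Hf hf
  rw [mul_sub]
  have e1 : b^(2*m)*(1+a/b)^(2*m) = (a+b)^(2*m) := by
    rw [← mul_pow]; congr 1; field_simp; ring
  have e2 : b^(2*m)*(L m*(a/b)^m) = L m*(a*b)^m := by
    rw [pow_mul, mul_left_comm, ← mul_pow]
    congr 2
    field_simp
  rw [e1, e2]

lemma Hf_ge1 {m : ℕ} (hm : 0 < m) {y1 y2 : ℝ} (hy1 : 0 ≤ y1) (hy2 : 0 ≤ y2) :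
    y1^(2*m) ≤ Hf m y1 y2 := by
  rcases eq_or_lt_of_le hy2 with h0 | h0
  · unfold Hf
    rw [← h0]
    rw [mul_zero, zero_pow (by omega : m ≠ 0), mul_zero, add_zero]
    linarith
  · rw [Hf_div hm h0]
    have hdiv : 0 ≤ y1/y2 := by positivity
    have := hf_ge_pow hm hdiv
    have e : y2^(2*m)*(y1/y2)^(2*m) = y1^(2*m) := by
      rw [← mul_pow]
      congr 1
      field_simp
    calc y1^(2*m) = y2^(2*m)*(y1/y2)^(2*m) := e.symm
      _ ≤ y2^(2*m)*hf m (y1/y2) := mul_le_mul_of_nonneg_left this (by positivity)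

lemma l1hom {m : ℕ} (hm : 0 < m) {x1 x2 y1 y2 r ρ : ℝ} (hx1 : 0 ≤ x1) (hx2 : 0 ≤ x2)
    (hy1 : 0 ≤ y1) (hy2 : 0 ≤ y2) (hr : 0 ≤ r) (hρ : 0 ≤ ρ)
    (hr2 : r^2 = x1*y1) (hρ2 : ρ^2 = x2*y2) :
    (Hf m r ρ)^2 ≤ Hf m x1 x2 * Hf m y1 y2 := by
  have hsq_pow : ∀ w : ℝ, ((w^(2*m))^2 : ℝ) = (w^2)^(2*m) := by
    intro w; rw [← pow_mul, ← pow_mul]; congr 1; omega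
  rcases eq_or_lt_of_le hx2 with hx20 | hx20
  · -- x2 = 0 → ρ = 0
    have hρ0 : ρ = 0 := by
      have h2 : ρ^2 = 0 := by rw [hρ2, ← hx20]; ring
      exact pow_eq_zero_iff two_ne_zero |>.mp h2
    subst hρ0
    rw [← hx20]
    have e1 : Hf m r 0 = r^(2*m) := by
      unfold Hf; rw [mul_zero, zero_pow (by omega : m ≠ 0), mul_zero, add_zero, sub_zero]
    have e2 : Hf m x1 0 = x1^(2*m) := by
      unfold Hf; rw [mul_zero, zero_pow (by omega : m ≠ 0), mul_zero, add_zero, sub_zero]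
    rw [e1, e2]
    calc (r^(2*m))^2 = (x1*y1)^(2*m) := by rw [hsq_pow, hr2]
      _ = x1^(2*m)*y1^(2*m) := mul_pow _ _ _
      _ ≤ x1^(2*m)*Hf m y1 y2 :=
          mul_le_mul_of_nonneg_left (Hf_ge1 hm hy1 hy2) (pow_nonneg hx1 _)
  rcases eq_or_lt_of_le hy2 with hy20 | hy20
  · -- y2 = 0 → ρ = 0
    have hρ0 : ρ = 0 := by
      have h2 : ρ^2 = 0 := by rw [hρ2, ← hy20]; ring
      exact pow_eq_zero_iff two_ne_zero |>.mp h2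
    subst hρ0
    rw [← hy20]
    have e1 : Hf m r 0 = r^(2*m) := by
      unfold Hf; rw [mul_zero, zero_pow (by omega : m ≠ 0), mul_zero, add_zero, sub_zero]
    have e2 : Hf m y1 0 = y1^(2*m) := by
      unfold Hf; rw [mul_zero, zero_pow (by omega : m ≠ 0), mul_zero, add_zero, sub_zero]
    rw [e1, e2]
    calc (r^(2*m))^2 = (x1*y1)^(2*m) := by rw [hsq_pow, hr2]
      _ = y1^(2*m)*x1^(2*m) := by rw [mul_pow]; ring
      _ ≤ y1^(2*m)*(Hf m x1 x2) :=
          mul_le_mul_of_nonneg_left (Hf_ge1 hm hx1 hx2) (pow_nonneg hy1 _)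
      _ = Hf m x1 x2 * y1^(2*m) := by ring
  -- x2 > 0, y2 > 0
  rcases eq_or_lt_of_le hx1 with hx10 | hx10
  · -- x1 = 0 → r = 0
    have hr0 : r = 0 := by
      have h2 : r^2 = 0 := by rw [hr2, ← hx10]; ring
      exact pow_eq_zero_iff two_ne_zero |>.mp h2
    subst hr0
    rw [← hx10]
    have e1 : Hf m 0 ρ = ρ^(2*m) := by
      unfold Hf; rw [zero_mul, zero_pow (by omega : m ≠ 0), mul_zero, zero_add, sub_zero]
    have e2 : Hf m 0 x2 = x2^(2*m) := by
      unfold Hf; rw [zero_mul, zero_pow (by omega : m ≠ 0), mul_zero, zero_add, sub_zero]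
    rw [e1, e2]
    calc (ρ^(2*m))^2 = (x2*y2)^(2*m) := by rw [hsq_pow, hρ2]
      _ = x2^(2*m)*y2^(2*m) := mul_pow _ _ _
      _ ≤ x2^(2*m)*Hf m y1 y2 := by
          apply mul_le_mul_of_nonneg_left _ (pow_nonneg hx2 _)
          rw [Hf_comm]
          exact Hf_ge1 hm hy2 hy1
  rcases eq_or_lt_of_le hy1 with hy10 | hy10
  · -- y1 = 0 → r = 0
    have hr0 : r = 0 := by
      have h2 : r^2 = 0 := by rw [hr2, ← hy10]; ring
      exact pow_eq_zero_iff two_ne_zero |>.mp h2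
    subst hr0
    rw [← hy10]
    have e1 : Hf m 0 ρ = ρ^(2*m) := by
      unfold Hf; rw [zero_mul, zero_pow (by omega : m ≠ 0), mul_zero, zero_add, sub_zero]
    have e2 : Hf m 0 y2 = y2^(2*m) := by
      unfold Hf; rw [zero_mul, zero_pow (by omega : m ≠ 0), mul_zero, zero_add, sub_zero]
    rw [e1, e2]
    calc (ρ^(2*m))^2 = (x2*y2)^(2*m) := by rw [hsq_pow, hρ2]
      _ = y2^(2*m)*x2^(2*m) := by rw [mul_pow]; ring
      _ ≤ y2^(2*m)*Hf m x1 x2 := by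
          apply mul_le_mul_of_nonneg_left _ (pow_nonneg hy2 _)
          rw [Hf_comm]
          exact Hf_ge1 hm hx2 hx1
      _ = Hf m x1 x2 * y2^(2*m) := by ring
  -- all positive
  have hρ0 : 0 < ρ := by
    rcases eq_or_lt_of_le hρ with h | h
    · exfalso; have : (0:ℝ) < x2*y2 := by positivity
      rw [← hρ2, ← h] at this; simp at this
    · exact h
  have hl1 := l1 hm (show (0:ℝ) ≤ x1/x2 by positivity) (show (0:ℝ) ≤ y1/y2 by positivity)
    (show (0:ℝ) ≤ r/ρ by positivity)
    (show (r/ρ)^2 = (x1/x2)*(y1/y2) by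
      rw [div_pow, hr2, hρ2]; field_simp)
  rw [Hf_div hm hρ0, Hf_div hm hx20, Hf_div hm hy20]
  have e : (ρ^(2*m))^2 = x2^(2*m)*y2^(2*m) := by
    rw [hsq_pow, hρ2, mul_pow]
  calc (ρ^(2*m)*hf m (r/ρ))^2 = (ρ^(2*m))^2*(hf m (r/ρ))^2 := by ring
    _ = x2^(2*m)*y2^(2*m)*(hf m (r/ρ))^2 := by rw [e]
    _ ≤ x2^(2*m)*y2^(2*m)*(hf m (x1/x2)*hf m (y1/y2)) := by
        apply mul_le_mul_of_nonneg_left hl1 (by positivity)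
    _ = x2^(2*m)*hf m (x1/x2)*(y2^(2*m)*hf m (y1/y2)) := by ring



lemma C2 {m : ℕ} (hm : 0 < m) (u v : ℂ) :
    ‖(u+v)^(2*m) - (L m : ℂ)*(u*v)^m‖
      ≤ Hf m (‖u‖) (‖v‖) := by
  have hL : (L m : ℂ) = 4^m/2 := by
    have h := two_L hm
    have h2 : ((2*L m : ℝ) : ℂ) = ((4^m : ℝ) : ℂ) := by exact_mod_cast congrArg Complex.ofReal h
    push_cast at h2
    linear_combination h2/2
  set G : ℂ := ∑ i ∈ Finset.range m, ((u+v)^2)^i*(4*(u*v))^(m-1-i) with hGdef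
  have hg : G*((u+v)^2-(4*(u*v))) = ((u+v)^2)^m - (4*(u*v))^m := geom_sum₂_mul _ _ m
  have hB : (u+v)^(2*m) - (L m:ℂ)*(u*v)^m = (1/2)*((u+v)^2)^m + (1/2)*G*((u-v)^2) := by
    rw [pow_mul, hL]
    linear_combination (-1/2 : ℂ) * hg
  rw [hB]
  set r := ‖u‖ with hr
  set ρ := ‖v‖ with hρ
  set n := (‖u+v‖)^2 with hn
  have hr0 : 0 ≤ r := norm_nonneg u
  have hρ0 : 0 ≤ ρ := norm_nonneg v
  have hGb : ‖G‖ ≤ ∑ i ∈ Finset.range m, n^i*(4*(r*ρ))^(m-1-i) := by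
    rw [hGdef]
    refine le_trans (norm_sum_le _ _) ?_
    apply Finset.sum_le_sum
    intro i _
    apply le_of_eq
    rw [norm_mul, norm_pow, norm_pow, norm_pow, norm_mul, norm_mul]
    norm_num
    rfl
  have htri : ‖(1/2)*((u+v)^2)^m + (1/2)*G*((u-v)^2)‖
      ≤ n^m/2 + (‖u-v‖)^2/2 * ‖G‖ := by
    refine le_trans (norm_add_le _ _) ?_
    rw [norm_mul, norm_mul, norm_mul, norm_pow, norm_pow, norm_pow]
    have e2 : ‖(1:ℂ)/2‖ = 1/2 := by
      rw [norm_div, norm_one, Complex.norm_two]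
    rw [e2]
    ring_nf
    apply le_of_eq
    ring
  have hpar : (‖u-v‖)^2 = 2*(r^2+ρ^2) - n := by
    rw [hn, hr, hρ]
    rw [Complex.sq_norm, Complex.sq_norm, Complex.sq_norm, Complex.sq_norm]
    simp only [Complex.normSq_apply, Complex.add_re, Complex.add_im, Complex.sub_re,
      Complex.sub_im]
    ring
  have hnv : n ≤ (r+ρ)^2 := by
    rw [hn]
    exact pow_le_pow_left₀ (norm_nonneg _) (norm_add_le u v) 2
  have hμv : 4*(r*ρ) ≤ (r+ρ)^2 := by nlinarith [sq_nonneg (r-ρ)]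
  have hpsi := psi_le hm (by positivity : (0:ℝ) ≤ n) hnv (by positivity : (0:ℝ) ≤ 4*(r*ρ))
    hμv (by ring : 2*(r^2+ρ^2) - (r+ρ)^2 = (r+ρ)^2 - 4*(r*ρ))
  have hHf : ((r+ρ)^2)^m - (4*(r*ρ))^m/2 = Hf m r ρ := by
    unfold Hf
    rw [← pow_mul, mul_pow]
    have h2L := two_L hm
    linear_combination ((r*ρ)^m/2) * h2L
  have hW2 : (‖u-v‖)^2/2 * ‖G‖
      ≤ (2*(r^2+ρ^2)-n)/2 * (∑ i ∈ Finset.range m, n^i*(4*(r*ρ))^(m-1-i)) := by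
    rw [hpar]
    apply mul_le_mul_of_nonneg_left hGb
    have : 0 ≤ (‖u-v‖)^2 := sq_nonneg _
    rw [hpar] at this
    linarith
  calc ‖(1/2)*((u+v)^2)^m + (1/2)*G*((u-v)^2)‖
      ≤ n^m/2 + (‖u-v‖)^2/2 * ‖G‖ := htri
    _ ≤ n^m/2 + (2*(r^2+ρ^2)-n)/2 * (∑ i ∈ Finset.range m, n^i*(4*(r*ρ))^(m-1-i)) := by
        linarith
    _ ≤ ((r+ρ)^2)^m - (4*(r*ρ))^m/2 := hpsi
    _ = Hf m r ρ := hHf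

lemma quad {A C b p q : ℝ} (hA : 0 ≤ A) (hC : 0 ≤ C) (hb : 0 ≤ b) (h : b^2 ≤ A*C)
    (hp : 0 ≤ p) (hq : 0 ≤ q) : 2*(b*(p*q)) ≤ A*p^2 + C*q^2 := by
  have h1 : b ≤ Real.sqrt A * Real.sqrt C := by
    have hb2 : b = Real.sqrt (b^2) := (Real.sqrt_sq hb).symm
    rw [hb2, ← Real.sqrt_mul hA C]
    exact Real.sqrt_le_sqrt h
  nlinarith [sq_nonneg (Real.sqrt A * p - Real.sqrt C * q), Real.sq_sqrt hA, Real.sq_sqrt hC,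
    Real.sqrt_nonneg A, Real.sqrt_nonneg C, mul_nonneg hp hq]

lemma cross_bound {m : ℕ} (hm : 0 < m) (p q : ℂ × ℂ) :
    (‖Rlam m (L m) (p, q)‖)^2
      ≤ Hf m (Complex.normSq p.1) (Complex.normSq p.2)
        * Hf m (Complex.normSq q.1) (Complex.normSq q.2) := by
  set u := p.1*(starRingEnd ℂ) q.1 with hu
  set v := p.2*(starRingEnd ℂ) q.2 with hv
  have hR : Rlam m (L m) (p, q) = (u+v)^(2*m) - (L m:ℂ)*(u*v)^m := by
    unfold Rlam
    rw [hu, hv]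
    congr 2
    ring
  have hC2 := C2 hm u v
  rw [hR]
  have h2 : (‖(u+v)^(2*m) - (L m:ℂ)*(u*v)^m‖)^2
      ≤ (Hf m (‖u‖) (‖v‖))^2 :=
    pow_le_pow_left₀ (norm_nonneg _) hC2 2
  refine h2.trans ?_
  apply l1hom hm (Complex.normSq_nonneg p.1) (Complex.normSq_nonneg p.2)
    (Complex.normSq_nonneg q.1) (Complex.normSq_nonneg q.2)
    (norm_nonneg u) (norm_nonneg v)
  · rw [hu, Complex.sq_norm, Complex.normSq_mul, Complex.normSq_conj]
  · rw [hv, Complex.sq_norm, Complex.normSq_mul, Complex.normSq_conj]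

lemma diag {m : ℕ} (hm : 0 < m) (p : ℂ × ℂ) :
    Rlam m (L m) (p, p) = ((Hf m (Complex.normSq p.1) (Complex.normSq p.2) : ℝ) : ℂ) := by
  unfold Rlam Hf
  have e1 : p.1*((starRingEnd ℂ) p.1) = ((Complex.normSq p.1 : ℝ) : ℂ) := Complex.mul_conj p.1
  have e2 : p.2*((starRingEnd ℂ) p.2) = ((Complex.normSq p.2 : ℝ) : ℂ) := Complex.mul_conj p.2
  have e3 : p.1*p.2*((starRingEnd ℂ) p.1)*((starRingEnd ℂ) p.2)
      = ((Complex.normSq p.1 * Complex.normSq p.2 : ℝ) : ℂ) := by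
    rw [Complex.ofReal_mul, ← e1, ← e2]; ring
  have e4 : p.1*((starRingEnd ℂ) p.1) + p.2*((starRingEnd ℂ) p.2)
      = ((Complex.normSq p.1 + Complex.normSq p.2 : ℝ) : ℂ) := by
    rw [Complex.ofReal_add, ← e1, ← e2]
  rw [e3, e4]
  push_cast
  ring

lemma herm (m : ℕ) (lam : ℝ) (p q : ℂ × ℂ) :
    Rlam m lam (q, p) = (starRingEnd ℂ) (Rlam m lam (p, q)) := by
  unfold Rlam
  simp only [map_sub, map_pow, map_add, map_mul, Complex.conj_conj, Complex.conj_ofReal]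
  ring

lemma split (m : ℕ) (lam : ℝ) (p q : ℂ × ℂ) :
    Rlam m lam (p, q) = Rlam m (L m) (p, q)
      + ((L m : ℂ) - (lam:ℂ))*((p.1*p.2)^m * (starRingEnd ℂ) ((q.1*q.2)^m)) := by
  unfold Rlam
  rw [map_pow, map_mul]
  ring

end S15

open S15 in
theorem stmt15 (m : ℕ) (hm : 0 < m) (lam : ℝ) :
    InP 2 (Rlam m lam) ↔ lam ≤ 2 ^ (2 * m - 1) := by
  constructor
  · -- forward: witness
    intro hP
    have h := hP ![(1,1),(1,-1)] ![1, (-1)^m]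
    rw [Fin.sum_univ_two] at h
    rw [Fin.sum_univ_two, Fin.sum_univ_two] at h
    simp only [Matrix.cons_val_zero, Matrix.cons_val_one, Matrix.head_cons] at h
    have e00 : Rlam m lam ((1,1),(1,1)) = (2:ℂ)^(2*m) - (lam:ℂ) := by
      simp [Rlam]
      norm_num
    have e01 : Rlam m lam ((1,1),(1,-1)) = -((lam:ℂ)*(-1)^m) := by
      simp [Rlam]
      omega
    have e10 : Rlam m lam ((1,-1),(1,1)) = -((lam:ℂ)*(-1)^m) := by
      simp [Rlam]
      omega
    have e11 : Rlam m lam ((1,-1),(1,-1)) = (2:ℂ)^(2*m) - (lam:ℂ) := by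
      simp [Rlam]
      norm_num
    rw [e00, e01, e10, e11] at h
    simp only [map_pow, map_neg, map_one, mul_one, one_mul] at h
    have hneg : ((-1:ℂ))^m*(-1)^m = 1 := by
      rw [← mul_pow]; norm_num
    have h2 : (0:ℂ) ≤ ((2*2^(2*m) - 4*lam : ℝ) : ℂ) := by
      refine le_of_le_of_eq h ?_
      push_cast
      linear_combination ((2:ℂ)^(2*m) - (lam:ℂ) - 2*(lam:ℂ)) * hneg
    rw [Complex.zero_le_real] at h2
    have hpw : (2:ℝ)^(2*m) = 2*2^(2*m-1) := by
      rw [← pow_succ']; congr 1; omega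
    rw [hpw] at h2
    linarith
  · -- backward
    intro hlam z a
    have hlamL : lam ≤ L m := hlam
    rw [Fin.sum_univ_two]
    rw [Fin.sum_univ_two, Fin.sum_univ_two]
    set p := z 0 with hp
    set q := z 1 with hq
    set a0 := a 0 with ha0
    set a1 := a 1 with ha1
    set c0 : ℂ := a0*(p.1*p.2)^m with hc0
    set c1 : ℂ := a1*(q.1*q.2)^m with hc1
    set B : ℂ := Rlam m (L m) (p, q) with hB
    set x1 := Complex.normSq p.1 with hx1
    set x2 := Complex.normSq p.2 with hx2
    set y1 := Complex.normSq q.1 with hy1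
    set y2 := Complex.normSq q.2 with hy2
    have hsplit : ∀ P Q : ℂ × ℂ, ∀ b c : ℂ, Rlam m lam (P,Q)*b*(starRingEnd ℂ) c
        = Rlam m (L m) (P,Q)*b*(starRingEnd ℂ) c
          + ((L m:ℂ)-(lam:ℂ))*((b*(P.1*P.2)^m) * (starRingEnd ℂ) (c*(Q.1*Q.2)^m)) := by
      intro P Q b c
      rw [split m lam P Q, map_mul]
      ring
    rw [hsplit p p a0 a0, hsplit p q a0 a1, hsplit q p a1 a0, hsplit q q a1 a1]
    have hrearr : Rlam m (L m) (p, p)*a0*(starRingEnd ℂ) a0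
          + ((L m:ℂ)-(lam:ℂ))*(c0*(starRingEnd ℂ) c0)
        + (Rlam m (L m) (p, q)*a0*(starRingEnd ℂ) a1
          + ((L m:ℂ)-(lam:ℂ))*(c0*(starRingEnd ℂ) c1))
        + (Rlam m (L m) (q, p)*a1*(starRingEnd ℂ) a0
          + ((L m:ℂ)-(lam:ℂ))*(c1*(starRingEnd ℂ) c0)
          + (Rlam m (L m) (q, q)*a1*(starRingEnd ℂ) a1
          + ((L m:ℂ)-(lam:ℂ))*(c1*(starRingEnd ℂ) c1)))
        = (Rlam m (L m) (p, p)*a0*(starRingEnd ℂ) a0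
            + Rlam m (L m) (q, q)*a1*(starRingEnd ℂ) a1
            + (Rlam m (L m) (p, q)*a0*(starRingEnd ℂ) a1
              + Rlam m (L m) (q, p)*a1*(starRingEnd ℂ) a0))
          + ((L m:ℂ)-(lam:ℂ))*((c0+c1)*(starRingEnd ℂ) (c0+c1)) := by
      rw [map_add]
      ring
    rw [hc0, hc1] at hrearr
    rw [hrearr]
    apply add_nonneg
    · -- main 2x2 part
      have d00 : Rlam m (L m) (p, p)*a0*(starRingEnd ℂ) a0
          = ((Hf m x1 x2 * Complex.normSq a0 : ℝ) : ℂ) := by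
        rw [diag hm p, mul_assoc, Complex.mul_conj]
        push_cast
        ring
      have d11 : Rlam m (L m) (q, q)*a1*(starRingEnd ℂ) a1
          = ((Hf m y1 y2 * Complex.normSq a1 : ℝ) : ℂ) := by
        rw [diag hm q, mul_assoc, Complex.mul_conj]
        push_cast
        ring
      have dherm : Rlam m (L m) (q, p)*a1*(starRingEnd ℂ) a0
          = (starRingEnd ℂ) (Rlam m (L m) (p, q)*a0*(starRingEnd ℂ) a1) := by
        rw [map_mul, map_mul, Complex.conj_conj, ← herm]
        ring
      have dcross : Rlam m (L m) (p, q)*a0*(starRingEnd ℂ) a1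
            + Rlam m (L m) (q, p)*a1*(starRingEnd ℂ) a0
          = ((2*(Rlam m (L m) (p, q)*a0*(starRingEnd ℂ) a1).re : ℝ) : ℂ) := by
        rw [dherm, Complex.add_conj]
      rw [d00, d11, dcross]
      rw [← Complex.ofReal_add, ← Complex.ofReal_add]
      rw [Complex.zero_le_real]
      -- real inequality
      have hcb := cross_bound hm p q
      have hAx : 0 ≤ Hf m x1 x2 := Hf_nonneg hm (Complex.normSq_nonneg _) (Complex.normSq_nonneg _)
      have hCy : 0 ≤ Hf m y1 y2 := Hf_nonneg hm (Complex.normSq_nonneg _) (Complex.normSq_nonneg _)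
      have hq2 := quad hAx hCy (norm_nonneg (Rlam m (L m) (p, q))) hcb
        (norm_nonneg a0) (norm_nonneg a1)
      have hre : |(Rlam m (L m) (p, q)*a0*(starRingEnd ℂ) a1).re|
          ≤ ‖Rlam m (L m) (p, q)‖ * (‖a0‖ * ‖a1‖) := by
        refine le_trans (Complex.abs_re_le_norm _) ?_
        rw [norm_mul, norm_mul, Complex.norm_conj, mul_assoc]
      have hns0 : Complex.normSq a0 = (‖a0‖)^2 := Complex.normSq_eq_norm_sq a0
      have hns1 : Complex.normSq a1 = (‖a1‖)^2 := Complex.normSq_eq_norm_sq a1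
      rw [hns0, hns1]
      have habs := abs_le.mp hre
      linarith
    · -- rank-one part
      rw [Complex.mul_conj]
      rw [show ((L m:ℂ)-(lam:ℂ)) = ((L m - lam : ℝ) : ℂ) by push_cast; ring]
      rw [← Complex.ofReal_mul]
      rw [Complex.zero_le_real]
      exact mul_nonneg (by linarith) (Complex.normSq_nonneg _)
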